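/- arXiv:1801.07665 — 6 statements merged into one kernel-verified Lean document; each statement's English description precedes it below -/
import Mathlib

section
/- For y ∈ [1/2, 1] and x ∈ [1-y, y], the function T_{x,y} defined by T_{x,y}(t) = -((1-y)/x)·t + 1 for t ∈ [0,x] and T_{x,y}(t) = -((1-y)/(1-x))·(1-t) + 1 for t ∈ (x,1] satisfies ∫₀¹ 1/(1+T_{x,y}(t))² dt = 1/(2(1+y)). In particular, the value of this integral does not depend on x. -/
lemma integral_T_xy_aux (a c u v : ℝ) (ha : a ≠ 0) (huv : u ≤ v)
    (hpos : ∀ t ∈ Set.Icc u v, 0 < c - a * t) :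
    ∫ t in u..v, 1 / (c - a * t) ^ 2
      = 1 / (a * (c - a * v)) - 1 / (a * (c - a * u)) := by
  have huIcc : Set.uIcc u v = Set.Icc u v := Set.uIcc_of_le huv
  have hcont : ContinuousOn (fun t => 1 / (c - a * t) ^ 2) (Set.uIcc u v) := by
    apply ContinuousOn.div continuousOn_const
    · fun_prop
    · intro t ht
      rw [huIcc] at ht
      exact pow_ne_zero _ (ne_of_gt (hpos t ht))
  refine intervalIntegral.integral_eq_sub_of_hasDerivAt
    (f := fun t => 1 / (a * (c - a * t))) (fun t ht => ?_)
    (hcont.intervalIntegrable)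
  rw [huIcc] at ht
  have hne : c - a * t ≠ 0 := ne_of_gt (hpos t ht)
  have h1 : HasDerivAt (fun t : ℝ => a * (c - a * t)) (a * (-a)) t := by
    have := (((hasDerivAt_id t).const_mul a).const_sub c).const_mul a
    simpa using this
  have h2 := h1.inv (by
    intro h
    exact hne (by
      rcases mul_eq_zero.mp h with h' | h'
      · exact absurd h' ha
      · exact h'))
  have : HasDerivAt (fun t : ℝ => 1 / (a * (c - a * t)))
      (-(a * (-a)) / (a * (c - a * t)) ^ 2) t := by
    rw [show (fun t : ℝ => 1 / (a * (c - a * t))) = (fun t => a * (c - a * t))⁻¹ from by ext; simp only [one_div, Pi.inv_apply]]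
    exact h2
  have e : 1 / (c - a * t) ^ 2 = -(a * -a) / (a * (c - a * t)) ^ 2 := by
    rw [div_eq_div_iff (pow_ne_zero _ hne) (pow_ne_zero _ (mul_ne_zero ha hne))]
    ring
  rw [e]
  exact this

theorem integral_T_xy (y x : ℝ) (hy : y ∈ Set.Icc (1/2 : ℝ) 1)
    (hx : x ∈ Set.Icc (1 - y) y)
    (T : ℝ → ℝ)
    (hT : ∀ t, T t = if t ≤ x then -((1 - y)/x) * t + 1 else -((1 - y)/(1 - x)) * (1 - t) + 1) :
    ∫ t in (0:ℝ)..1, 1 / (1 + T t)^2 = 1 / (2 * (1 + y)) := by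
  obtain ⟨hy1, hy2⟩ := hy
  obtain ⟨hx1, hx2⟩ := hx
  rcases eq_or_lt_of_le hy2 with h1 | h1
  · -- y = 1
    subst h1
    have hT1 : ∀ t, T t = 1 := by
      intro t; rw [hT]; split <;> simp
    simp only [hT1]
    rw [intervalIntegral.integral_const]
    norm_num
  · -- y < 1
    have hx0 : 0 < x := by linarith
    have hx1' : x < 1 := by linarith
    have hy0 : 0 < 1 + y := by linarith
    set a : ℝ := (1 - y) / x with ha_def
    set b : ℝ := (1 - y) / (1 - x) with hb_def
    have ha0 : 0 < a := div_pos (by linarith) hx0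
    have hb0 : 0 < b := div_pos (by linarith) (by linarith)
    have hax : a * x = 1 - y := div_mul_cancel₀ _ (ne_of_gt hx0)
    have hbx : b * (1 - x) = 1 - y := div_mul_cancel₀ _ (by linarith)
    clear_value a b
    -- first piece
    have hpos1 : ∀ t ∈ Set.Icc (0:ℝ) x, 0 < 2 - a * t := by
      intro t ht
      have : a * t ≤ a * x := mul_le_mul_of_nonneg_left ht.2 (le_of_lt ha0)
      nlinarith
    have key1 : ∫ t in (0:ℝ)..x, 1 / (1 + T t) ^ 2 = x / (2 * (1 + y)) := by
      have hcongr : ∀ t ∈ Set.uIcc (0:ℝ) x, 1 / (1 + T t) ^ 2 = 1 / (2 - a * t) ^ 2 := by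
        intro t ht
        rw [Set.uIcc_of_le (le_of_lt hx0)] at ht
        rw [hT t, if_pos ht.2]
        ring_nf
      rw [intervalIntegral.integral_congr hcongr,
        integral_T_xy_aux a 2 0 x (ne_of_gt ha0) (le_of_lt hx0) hpos1]
      rw [hax]
      have : (2 : ℝ) - (1 - y) = 1 + y := by ring
      rw [this]
      have hx'' : x = (1 - y) / a := by
        rw [eq_div_iff ha0.ne']; linarith [hax]
      rw [hx'']
      have hy' : (1 : ℝ) + y ≠ 0 := ne_of_gt hy0
      field_simp
      ring
    -- second piece
    have hpos2 : ∀ t ∈ Set.Icc x (1:ℝ), 0 < (2 - b) - (-b) * t := by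
      intro t ht
      have : b * x ≤ b * t := mul_le_mul_of_nonneg_left ht.1 (le_of_lt hb0)
      nlinarith
    have key2 : ∫ t in x..(1:ℝ), 1 / (1 + T t) ^ 2 = (1 - x) / (2 * (1 + y)) := by
      have hcongr : ∀ᵐ t : ℝ, t ∈ Set.uIoc x (1:ℝ) →
          1 / (1 + T t) ^ 2 = 1 / ((2 - b) - (-b) * t) ^ 2 := by
        refine Filter.Eventually.of_forall (fun t ht => ?_)
        rw [Set.uIoc_of_le (le_of_lt hx1')] at ht
        rw [hT t, if_neg (not_le.mpr ht.1)]
        ring_nf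
      rw [intervalIntegral.integral_congr_ae hcongr,
        integral_T_xy_aux (-b) (2 - b) x 1 (by linarith) (le_of_lt hx1') hpos2]
      have e1 : (2 : ℝ) - b - -b * 1 = 2 := by ring
      have e2 : (2 : ℝ) - b - -b * x = 1 + y := by nlinarith [hbx]
      rw [e1, e2]
      have hb' : b ≠ 0 := ne_of_gt hb0
      have hx' : (1 : ℝ) - x = (1 - y) / b := by
        rw [eq_div_iff hb']; linarith [hbx]
      rw [hx']
      have hy' : (1 : ℝ) + y ≠ 0 := ne_of_gt hy0
      field_simp
      ring
    -- combine
    have hint1 : IntervalIntegrable (fun t => 1 / (1 + T t) ^ 2) MeasureTheory.volume 0 x := by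
      rw [intervalIntegrable_iff]
      have hg : MeasureTheory.IntegrableOn (fun t => 1 / (2 - a * t) ^ 2)
          (Set.uIoc (0:ℝ) x) MeasureTheory.volume := by
        have hcont : ContinuousOn (fun t => 1 / (2 - a * t) ^ 2) (Set.uIcc (0:ℝ) x) := by
          apply ContinuousOn.div continuousOn_const
          · fun_prop
          · intro t ht
            rw [Set.uIcc_of_le (le_of_lt hx0)] at ht
            exact pow_ne_zero _ (ne_of_gt (hpos1 t ht))
        have := hcont.intervalIntegrable (μ := MeasureTheory.volume)
        rwa [intervalIntegrable_iff] at this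
      refine hg.congr_fun (fun t ht => ?_) measurableSet_uIoc
      rw [Set.uIoc_of_le (le_of_lt hx0)] at ht
      rw [hT t, if_pos ht.2]
      ring_nf
    have hint2 : IntervalIntegrable (fun t => 1 / (1 + T t) ^ 2) MeasureTheory.volume x 1 := by
      rw [intervalIntegrable_iff]
      have hg : MeasureTheory.IntegrableOn (fun t => 1 / ((2 - b) - (-b) * t) ^ 2)
          (Set.uIoc x (1:ℝ)) MeasureTheory.volume := by
        have hcont : ContinuousOn (fun t => 1 / ((2 - b) - (-b) * t) ^ 2)
            (Set.uIcc x (1:ℝ)) := by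
          apply ContinuousOn.div continuousOn_const
          · fun_prop
          · intro t ht
            rw [Set.uIcc_of_le (le_of_lt hx1')] at ht
            exact pow_ne_zero _ (ne_of_gt (hpos2 t ht))
        have := hcont.intervalIntegrable (μ := MeasureTheory.volume)
        rwa [intervalIntegrable_iff] at this
      refine hg.congr_fun (fun t ht => ?_) measurableSet_uIoc
      rw [Set.uIoc_of_le (le_of_lt hx1')] at ht
      rw [hT t, if_neg (not_le.mpr ht.1)]
      ring_nf
    rw [← intervalIntegral.integral_add_adjacent_intervals hint1 hint2, key1, key2]
    field_simp
    ring
end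

section
/- For x ∈ [0, 1/2] and y ∈ [1/2, 1] with x < y, the function P_{x,y} defined by P(t) = 1-t on [0,x], P(t) = ((1-x-y)/(x-y))·(t-y) + y on (x,y], and P(t) = t on (y,1] satisfies ∫₀¹ 1/(1+P_{x,y}(t))² dt = (1 - x + xy)/((2-x)(1+y)). -/
theorem integral_P_xy (x y : ℝ) (hx : x ∈ Set.Icc (0:ℝ) (1/2))
    (hy : y ∈ Set.Icc (1/2 : ℝ) 1) (hxy : x < y)
    (P : ℝ → ℝ)
    (hP : ∀ t, P t = if t ≤ x then 1 - t
      else if t ≤ y then ((1 - x - y)/(x - y)) * (t - y) + y else t) :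
    ∫ t in (0:ℝ)..1, 1 / (1 + P t)^2 = (1 - x + x * y) / ((2 - x) * (1 + y)) := by
  obtain ⟨hx0, hx2⟩ := hx
  obtain ⟨hy2, hy1⟩ := hy
  set m := (1 - x - y)/(x - y) with hm
  have hxyne : x - y ≠ 0 := ne_of_lt (by linarith)
  have hmq : m * (x - y) = 1 - x - y := by
    rw [hm]; field_simp
  have h2x : (0:ℝ) < 2 - x := by linarith
  have h1y : (0:ℝ) < 1 + y := by linarith
  -- equalities on subintervals
  have e1 : Set.EqOn (fun t => 1 / (1 + P t)^2) (fun t => 1 / (2 - t)^2)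
      (Set.uIcc (0:ℝ) x) := by
    intro t ht
    rw [Set.uIcc_of_le hx0] at ht
    simp only [hP, if_pos ht.2]
    ring_nf
  have e2 : Set.EqOn (fun t => 1 / (1 + P t)^2)
      (fun t => 1 / (1 + (m * (t - y) + y))^2) (Set.uIcc x y) := by
    intro t ht
    rw [Set.uIcc_of_le hxy.le] at ht
    simp only [hP]
    split_ifs with h1 h2
    · have htx : t = x := le_antisymm h1 ht.1
      subst htx
      have h : m * (t - y) + y = 1 - t := by linarith [hmq]
      rw [h]
    · rfl
    · exact absurd ht.2 h2
  have e3 : Set.EqOn (fun t => 1 / (1 + P t)^2) (fun t => 1 / (1 + t)^2)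
      (Set.uIcc y 1) := by
    intro t ht
    rw [Set.uIcc_of_le hy1] at ht
    simp only [hP]
    split_ifs with h1 h2
    · exfalso; linarith [ht.1]
    · have hty : t = y := le_antisymm h2 ht.1
      subst hty; simp
    · rfl
  -- positivity of middle denominator
  have hu : ∀ t ∈ Set.uIcc x y, (0:ℝ) < 1 + (m * (t - y) + y) := by
    intro t ht
    rw [Set.uIcc_of_le hxy.le] at ht
    rcases le_or_gt 0 m with hm0 | hm0
    · nlinarith [mul_nonneg hm0 (sub_nonneg.2 ht.1), hmq]
    · nlinarith [mul_nonneg (neg_nonneg.2 hm0.le) (neg_nonneg.2 (show t - y ≤ 0 by linarith [ht.2]))]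
  -- continuity of pieces
  have hc1 : ContinuousOn (fun t : ℝ => 1 / (2 - t)^2) (Set.uIcc (0:ℝ) x) := by
    apply ContinuousOn.div continuousOn_const (by fun_prop)
    intro t ht
    rw [Set.uIcc_of_le hx0] at ht
    have : (0:ℝ) < 2 - t := by linarith [ht.2]
    positivity
  have hc2 : ContinuousOn (fun t : ℝ => 1 / (1 + (m * (t - y) + y))^2)
      (Set.uIcc x y) := by
    apply ContinuousOn.div continuousOn_const (by fun_prop)
    intro t ht
    have := hu t ht
    positivity
  have hc3 : ContinuousOn (fun t : ℝ => 1 / (1 + t)^2) (Set.uIcc y 1) := by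
    apply ContinuousOn.div continuousOn_const (by fun_prop)
    intro t ht
    rw [Set.uIcc_of_le hy1] at ht
    have : (0:ℝ) < 1 + t := by linarith [ht.1]
    positivity
  -- integrability of the original integrand on each piece
  have i1 : IntervalIntegrable (fun t => 1 / (1 + P t)^2) MeasureTheory.volume 0 x :=
    ((hc1.congr e1)).intervalIntegrable
  have i2 : IntervalIntegrable (fun t => 1 / (1 + P t)^2) MeasureTheory.volume x y :=
    ((hc2.congr e2)).intervalIntegrable
  have i3 : IntervalIntegrable (fun t => 1 / (1 + P t)^2) MeasureTheory.volume y 1 :=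
    ((hc3.congr e3)).intervalIntegrable
  -- split
  rw [← intervalIntegral.integral_add_adjacent_intervals (b := y) (i1.trans i2) i3,
      ← intervalIntegral.integral_add_adjacent_intervals (b := x) i1 i2]
  -- compute piece 1
  have I1 : ∫ t in (0:ℝ)..x, 1 / (1 + P t)^2 = (2 - x)⁻¹ - 2⁻¹ := by
    rw [intervalIntegral.integral_congr e1]
    rw [intervalIntegral.integral_eq_sub_of_hasDerivAt
      (f := fun t : ℝ => (2 - t)⁻¹) (f' := fun t : ℝ => 1 / (2 - t)^2) ?_ hc1.intervalIntegrable]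
    · norm_num
    · intro t ht
      rw [Set.uIcc_of_le hx0] at ht
      have hne : 2 - t ≠ 0 := by intro h; linarith [ht.2]
      have := (HasDerivAt.const_sub 2 (hasDerivAt_id t)).inv hne
      exact this.congr_deriv (by simp)
  -- compute piece 3
  have I3 : ∫ t in y..(1:ℝ), 1 / (1 + P t)^2 = (1 + y)⁻¹ - 2⁻¹ := by
    rw [intervalIntegral.integral_congr e3]
    rw [intervalIntegral.integral_eq_sub_of_hasDerivAt
      (f := fun t : ℝ => -(1 + t)⁻¹) (f' := fun t : ℝ => 1 / (1 + t)^2) ?_ hc3.intervalIntegrable]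
    · norm_num
      ring
    · intro t ht
      rw [Set.uIcc_of_le hy1] at ht
      have hne : 1 + t ≠ 0 := by intro h; linarith [ht.1]
      have := ((HasDerivAt.const_add 1 (hasDerivAt_id t)).inv hne).neg
      exact this.congr_deriv (by simp [neg_div])
  -- compute piece 2
  have I2 : ∫ t in x..y, 1 / (1 + P t)^2 = (y - x) / ((2 - x) * (1 + y)) := by
    rw [intervalIntegral.integral_congr e2]
    rcases eq_or_ne m 0 with hm0 | hm0
    · have hxy1 : 1 - x - y = 0 := by rw [hm0] at hmq; linarith [hmq]
      simp only [hm0, zero_mul, zero_add]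
      rw [intervalIntegral.integral_const]
      have h2xy : 2 - x = 1 + y := by linarith
      rw [h2xy]
      rw [smul_eq_mul, sq]
      rw [mul_one_div]
    · have hf : ∀ t ∈ Set.uIcc x y,
          HasDerivAt (fun t : ℝ => -(m⁻¹ * (1 + (m * (t - y) + y))⁻¹))
            (1 / (1 + (m * (t - y) + y))^2) t := by
        intro t ht
        have hne : 1 + (m * (t - y) + y) ≠ 0 := ne_of_gt (hu t ht)
        have hdu : HasDerivAt (fun t : ℝ => 1 + (m * (t - y) + y)) m t := by
          have : HasDerivAt (fun t : ℝ => m * (t - y)) m t := by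
            simpa using ((hasDerivAt_id t).sub_const y).const_mul m
          simpa using ((this.add_const y).const_add 1)
        have := ((hdu.inv hne).const_mul m⁻¹).neg
        exact this.congr_deriv (by field_simp)
      rw [intervalIntegral.integral_eq_sub_of_hasDerivAt hf hc2.intervalIntegrable]
      have hux : 1 + (m * (x - y) + y) = 2 - x := by linarith [hmq]
      have h1xy : 1 - x - y ≠ 0 := by
        intro h
        apply hm0
        rw [hm, h, zero_div]
      rw [hux]
      simp only [sub_self, mul_zero, zero_add]
      rw [hm]
      field_simp
      ring
  rw [I1, I2, I3]
  field_simp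
  ring
end

section
/- Let A be a Pickands dependence function and suppose ∫₀¹ 1/(1+A(t))² dt = (ρ₀+3)/12 for some ρ₀ ∈ [0,1] (i.e. Spearman's rho of C_A equals ρ₀). Then A(t) ≥ L_{(3-ρ₀)/(3+ρ₀)}(t) for all t ∈ [0,1], where L_y(t) = max(1-t, y, t). -/
lemma integral_inv_sq_affine (p q a b : ℝ) (hq : q ≠ 0)
    (h : ∀ s ∈ Set.uIcc a b, 0 < p + q * s) :
    ∫ s in a..b, ((p + q * s) ^ 2)⁻¹ = q⁻¹ * ((p + q * a)⁻¹ - (p + q * b)⁻¹) := by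
  have key : ∀ s ∈ Set.uIcc a b,
      HasDerivAt (fun s => -(q⁻¹ * (p + q * s)⁻¹)) (((p + q * s) ^ 2)⁻¹) s := by
    intro s hs
    have h1 : HasDerivAt (fun s : ℝ => p + q * s) q s := by
      simpa using ((hasDerivAt_id s).const_mul q).const_add p
    have h2 := ((h1.inv (h s hs).ne').const_mul q⁻¹).neg
    convert h2 using 1
    have := (h s hs).ne'
    · rfl
    · rfl
    · rfl
    · rw [neg_div, mul_neg, neg_neg, ← mul_div_assoc, inv_mul_cancel₀ hq, one_div]
  have hint : IntervalIntegrable (fun s => ((p + q * s) ^ 2)⁻¹) MeasureTheory.volume a b := by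
    apply ContinuousOn.intervalIntegrable
    apply ContinuousOn.inv₀
    · fun_prop
    · intro s hs
      exact pow_ne_zero 2 (h s hs).ne'
  rw [intervalIntegral.integral_eq_sub_of_hasDerivAt key hint]
  ring

theorem lower_bound_rho (A : ℝ → ℝ) (ρ₀ : ℝ) (hρ : ρ₀ ∈ Set.Icc (0:ℝ) 1)
    (hconv : ConvexOn ℝ (Set.Icc (0:ℝ) 1) A)
    (h0 : A 0 = 1) (h1 : A 1 = 1)
    (hbound : ∀ t ∈ Set.Icc (0:ℝ) 1, max (1 - t) t ≤ A t ∧ A t ≤ 1)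
    (hrho : ∫ t in (0:ℝ)..1, 1 / (1 + A t)^2 = (ρ₀ + 3) / 12) :
    ∀ t ∈ Set.Icc (0:ℝ) 1, max (max (1 - t) ((3 - ρ₀)/(3 + ρ₀))) t ≤ A t := by
  intro t ht
  obtain ⟨hb1, hb2⟩ := hbound t ht
  rcases le_or_gt ((3 - ρ₀) / (3 + ρ₀)) (A t) with hy | hy
  · exact max_le (max_le ((le_max_left _ _).trans hb1) hy) ((le_max_right _ _).trans hb1)
  exfalso
  obtain ⟨hρ0, hρ1⟩ := hρ
  have h3ρ : (0:ℝ) < 3 + ρ₀ := by linarith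
  have hy1 : (3 - ρ₀) / (3 + ρ₀) ≤ 1 := by
    rw [div_le_one h3ρ]; linarith
  set c := A t with hc
  have hc1 : c < 1 := lt_of_lt_of_le hy hy1
  have ht0 : 0 < t := by
    have h' : 1 - t ≤ c := (le_max_left _ _).trans hb1
    linarith
  have ht1 : t < 1 := by
    have h' : t ≤ c := (le_max_right _ _).trans hb1
    linarith
  have hA0 : ∀ s ∈ Set.Icc (0:ℝ) 1, 0 < 1 + A s := by
    intro s hs
    have h' := (hbound s hs).1
    have h'' : (0:ℝ) ≤ max (1 - s) s := le_trans hs.1 (le_max_right _ _)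
    linarith
  -- the integrand is interval integrable, since otherwise the integral would be 0
  have hint : IntervalIntegrable (fun s => 1 / (1 + A s) ^ 2) MeasureTheory.volume 0 1 := by
    by_contra hni
    rw [intervalIntegral.integral_undef hni] at hrho
    linarith
  have hint1 : IntervalIntegrable (fun s => 1 / (1 + A s) ^ 2) MeasureTheory.volume 0 t := by
    apply hint.mono_set
    rw [Set.uIcc_of_le ht0.le, Set.uIcc_of_le (by norm_num : (0:ℝ) ≤ 1)]
    exact Set.Icc_subset_Icc le_rfl ht1.le
  have hint2 : IntervalIntegrable (fun s => 1 / (1 + A s) ^ 2) MeasureTheory.volume t 1 := by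
    apply hint.mono_set
    rw [Set.uIcc_of_le ht1.le, Set.uIcc_of_le (by norm_num : (0:ℝ) ≤ 1)]
    exact Set.Icc_subset_Icc ht0.le le_rfl
  have h1c : (0:ℝ) < 1 + c := by
    have := hA0 t ht; linarith
  have htne : t ≠ 0 := ht0.ne'
  have h1t : (1:ℝ) - t ≠ 0 := by linarith
  have hc1ne : c - 1 ≠ 0 := by linarith
  have h1cne : 1 + c ≠ 0 := h1c.ne'
  -- first affine piece: 2 + (c-1)/t * s  on [0,t]
  have hq1 : (c - 1) / t ≠ 0 := div_ne_zero (by linarith) ht0.ne'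
  have hpos1 : ∀ s ∈ Set.uIcc (0:ℝ) t, 0 < 2 + (c - 1) / t * s := by
    intro s hs
    rw [Set.uIcc_of_le ht0.le] at hs
    have hnn : 0 ≤ (1 - c) / t := div_nonneg (by linarith) ht0.le
    have h1' : (1 - c) / t * s ≤ (1 - c) / t * t := mul_le_mul_of_nonneg_left hs.2 hnn
    rw [div_mul_cancel₀ _ ht0.ne'] at h1'
    have heq : (c - 1) / t * s = -((1 - c) / t * s) := by ring
    rw [heq]; linarith
  have hchord1 : ∀ s ∈ Set.Icc (0:ℝ) t, A s ≤ 1 + (c - 1) / t * s := by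
    intro s hs
    have h0m : (0:ℝ) ∈ Set.Icc (0:ℝ) 1 := by norm_num
    have ha : 0 ≤ 1 - s / t := by
      have := (div_le_one ht0).mpr hs.2; linarith
    have hb : 0 ≤ s / t := div_nonneg hs.1 ht0.le
    have hsum : (1 - s / t) + s / t = 1 := by ring
    have hcv := hconv.2 h0m ht ha hb hsum
    simp only [smul_eq_mul] at hcv
    have heq : (1 - s / t) * 0 + s / t * t = s := by field_simp; ring
    rw [heq, h0] at hcv
    have heq2 : (1 - s / t) * 1 + s / t * A t = 1 + (c - 1) / t * s := by
      rw [← hc]; field_simp; ring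
    linarith [heq2 ▸ hcv]
  have hcmp1 : ∫ s in (0:ℝ)..t, ((2 + (c - 1) / t * s) ^ 2)⁻¹
      ≤ ∫ s in (0:ℝ)..t, 1 / (1 + A s) ^ 2 := by
    apply intervalIntegral.integral_mono_on ht0.le ?_ hint1
    · intro s hs
      have hsI : s ∈ Set.Icc (0:ℝ) 1 := ⟨hs.1, hs.2.trans ht1.le⟩
      have hAs := hA0 s hsI
      have hle : 1 + A s ≤ 2 + (c - 1) / t * s := by
        have := hchord1 s hs; linarith
      rw [one_div]
      exact inv_anti₀ (by positivity) (pow_le_pow_left₀ hAs.le hle 2)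
    · apply ContinuousOn.intervalIntegrable
      apply ContinuousOn.inv₀
      · fun_prop
      · intro s hs; exact pow_ne_zero 2 (hpos1 s hs).ne'
  have hval1 : ∫ s in (0:ℝ)..t, ((2 + (c - 1) / t * s) ^ 2)⁻¹ = t / (2 * (1 + c)) := by
    rw [integral_inv_sq_affine 2 ((c - 1) / t) 0 t hq1 hpos1]
    have h2t : 2 + (c - 1) / t * t = 1 + c := by
      rw [div_mul_cancel₀ _ htne]; ring
    rw [h2t, mul_zero, add_zero, inv_div]
    field_simp
    ring
  -- second affine piece: (1 + c - (1-c)/(1-t)*t) + (1-c)/(1-t) * s on [t,1]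
  set q2 : ℝ := (1 - c) / (1 - t) with hq2def
  have hq2pos : 0 < q2 := div_pos (by linarith) (by linarith)
  have hq2 : q2 ≠ 0 := hq2pos.ne'
  set p2 : ℝ := 1 + c - q2 * t with hp2def
  have hpt : p2 + q2 * t = 1 + c := by ring
  have hq2t : q2 * (1 - t) = 1 - c := by
    rw [hq2def, div_mul_cancel₀ _ h1t]
  have hq2t' : q2 * (1 - t) = q2 - q2 * t := by ring
  have hp1 : p2 + q2 * 1 = 2 := by
    rw [hp2def]; linarith [hq2t, hq2t']
  have hpos2 : ∀ s ∈ Set.uIcc t 1, 0 < p2 + q2 * s := by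
    intro s hs
    rw [Set.uIcc_of_le ht1.le] at hs
    have : q2 * t ≤ q2 * s := mul_le_mul_of_nonneg_left hs.1 hq2pos.le
    nlinarith [hpt]
  have hchord2 : ∀ s ∈ Set.Icc t 1, A s ≤ p2 - 1 + q2 * s := by
    intro s hs
    have h1m : (1:ℝ) ∈ Set.Icc (0:ℝ) 1 := by norm_num
    have ha : 0 ≤ (1 - s) / (1 - t) := div_nonneg (by linarith [hs.2]) (by linarith)
    have hb : 0 ≤ (s - t) / (1 - t) := div_nonneg (by linarith [hs.1]) (by linarith)
    have hsum : (1 - s) / (1 - t) + (s - t) / (1 - t) = 1 := by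
      rw [← add_div, div_eq_one_iff_eq h1t]; ring
    have hcv := hconv.2 ht h1m ha hb hsum
    simp only [smul_eq_mul] at hcv
    have heq : (1 - s) / (1 - t) * t + (s - t) / (1 - t) * 1 = s := by
      field_simp
      ring
    rw [heq, h1, ← hc] at hcv
    have heq2 : (1 - s) / (1 - t) * c + (s - t) / (1 - t) * 1 = p2 - 1 + q2 * s := by
      rw [hp2def, hq2def]; field_simp; ring
    linarith [heq2 ▸ hcv]
  have hcmp2 : ∫ s in t..(1:ℝ), ((p2 + q2 * s) ^ 2)⁻¹
      ≤ ∫ s in t..(1:ℝ), 1 / (1 + A s) ^ 2 := by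
    apply intervalIntegral.integral_mono_on ht1.le ?_ hint2
    · intro s hs
      have hsI : s ∈ Set.Icc (0:ℝ) 1 := ⟨ht0.le.trans hs.1, hs.2⟩
      have hAs := hA0 s hsI
      have hle : 1 + A s ≤ p2 + q2 * s := by
        have := hchord2 s hs; linarith
      rw [one_div]
      exact inv_anti₀ (by positivity) (pow_le_pow_left₀ hAs.le hle 2)
    · apply ContinuousOn.intervalIntegrable
      apply ContinuousOn.inv₀
      · fun_prop
      · intro s hs; exact pow_ne_zero 2 (hpos2 s hs).ne'
  have hval2 : ∫ s in t..(1:ℝ), ((p2 + q2 * s) ^ 2)⁻¹ = (1 - t) / (2 * (1 + c)) := by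
    have h1mc : (1:ℝ) - c ≠ 0 := by linarith
    rw [integral_inv_sq_affine p2 q2 t 1 hq2 hpos2, hpt, hp1, hq2def, inv_div]
    field_simp
    ring
  have hsplit : (∫ s in (0:ℝ)..t, 1 / (1 + A s) ^ 2) + ∫ s in t..(1:ℝ), 1 / (1 + A s) ^ 2
      = (ρ₀ + 3) / 12 := by
    rw [intervalIntegral.integral_add_adjacent_intervals hint1 hint2]
    exact hrho
  rw [hval1] at hcmp1
  rw [hval2] at hcmp2
  have hfinal : 1 / (2 * (1 + c)) ≤ (ρ₀ + 3) / 12 := by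
    have hsumeq : t / (2 * (1 + c)) + (1 - t) / (2 * (1 + c)) = 1 / (2 * (1 + c)) := by
      rw [← add_div]; congr 1; ring
    linarith [hcmp1, hcmp2, hsplit, hsumeq]
  have hmul : c * (3 + ρ₀) < 3 - ρ₀ := (lt_div_iff₀ h3ρ).mp hy
  have hdiv : 12 ≤ (ρ₀ + 3) * (2 * (1 + c)) := by
    have h2c : (0:ℝ) < 2 * (1 + c) := by linarith
    rw [div_le_div_iff₀ h2c (by norm_num : (0:ℝ) < 12)] at hfinal
    linarith
  nlinarith [hmul, hdiv]
end

section
/- Fix ρ₀ ∈ (0,1) and define y_{ρ₀}(t) = (-6 + 2ρ₀ - 15t - ρ₀t - 6√(6 - 2ρ₀ - (15+ρ₀)t(1-t)))/(-30 - 2ρ₀ + 15t + ρ₀t). Then y_{ρ₀}((3-ρ₀)/(6+ρ₀)) = (3-ρ₀)/(3+ρ₀) and y_{ρ₀}((3+2ρ₀)/(6+ρ₀)) = 1, and y_{ρ₀} is strictly increasing on [(3-ρ₀)/(6+ρ₀), (3+2ρ₀)/(6+ρ₀)]. -/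
set_option maxHeartbeats 1000000 in
theorem y_rho_mono (ρ₀ : ℝ) (hρ : ρ₀ ∈ Set.Ioo (0:ℝ) 1)
    (y : ℝ → ℝ)
    (hy : ∀ t, y t = (-6 + 2 * ρ₀ - 15 * t - ρ₀ * t -
        6 * Real.sqrt (6 - 2 * ρ₀ - (15 + ρ₀) * t * (1 - t))) /
        (-30 - 2 * ρ₀ + 15 * t + ρ₀ * t)) :
    y ((3 - ρ₀)/(6 + ρ₀)) = (3 - ρ₀)/(3 + ρ₀) ∧
    y ((3 + 2 * ρ₀)/(6 + ρ₀)) = 1 ∧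
    StrictMonoOn y (Set.Icc ((3 - ρ₀)/(6 + ρ₀)) ((3 + 2 * ρ₀)/(6 + ρ₀))) := by
  obtain ⟨h0, h1⟩ := hρ
  have h6 : (0:ℝ) < 6 + ρ₀ := by linarith
  have h6' : (6:ℝ) + ρ₀ ≠ 0 := ne_of_gt h6
  have h3 : (0:ℝ) < 3 + ρ₀ := by linarith
  have hsnn : (0:ℝ) ≤ 3 * (3 - ρ₀) / (6 + ρ₀) := by
    apply div_nonneg <;> nlinarith
  -- sqrt at the endpoints
  have hs1 : Real.sqrt (6 - 2 * ρ₀ - (15 + ρ₀) * ((3 - ρ₀)/(6 + ρ₀)) * (1 - (3 - ρ₀)/(6 + ρ₀)))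
      = 3 * (3 - ρ₀) / (6 + ρ₀) := by
    rw [show 6 - 2 * ρ₀ - (15 + ρ₀) * ((3 - ρ₀)/(6 + ρ₀)) * (1 - (3 - ρ₀)/(6 + ρ₀))
        = (3 * (3 - ρ₀) / (6 + ρ₀))^2 by field_simp; ring]
    exact Real.sqrt_sq hsnn
  have hs2 : Real.sqrt (6 - 2 * ρ₀ - (15 + ρ₀) * ((3 + 2*ρ₀)/(6 + ρ₀)) * (1 - (3 + 2*ρ₀)/(6 + ρ₀)))
      = 3 * (3 - ρ₀) / (6 + ρ₀) := by
    rw [show 6 - 2 * ρ₀ - (15 + ρ₀) * ((3 + 2*ρ₀)/(6 + ρ₀)) * (1 - (3 + 2*ρ₀)/(6 + ρ₀))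
        = (3 * (3 - ρ₀) / (6 + ρ₀))^2 by field_simp; ring]
    exact Real.sqrt_sq hsnn
  -- denominators at the endpoints are nonzero
  have hd1 : -30 - 2 * ρ₀ + 15 * ((3 - ρ₀)/(6 + ρ₀)) + ρ₀ * ((3 - ρ₀)/(6 + ρ₀)) ≠ 0 := by
    have : -30 - 2 * ρ₀ + 15 * ((3 - ρ₀)/(6 + ρ₀)) + ρ₀ * ((3 - ρ₀)/(6 + ρ₀))
        = (-135 - 54*ρ₀ - 3*ρ₀^2)/(6+ρ₀) := by field_simp; ring
    rw [this]
    intro h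
    have := (div_eq_zero_iff.mp h).resolve_right h6'
    nlinarith
  have hd2 : -30 - 2 * ρ₀ + 15 * ((3 + 2*ρ₀)/(6 + ρ₀)) + ρ₀ * ((3 + 2*ρ₀)/(6 + ρ₀)) ≠ 0 := by
    have : -30 - 2 * ρ₀ + 15 * ((3 + 2*ρ₀)/(6 + ρ₀)) + ρ₀ * ((3 + 2*ρ₀)/(6 + ρ₀))
        = (-135 - 9*ρ₀)/(6+ρ₀) := by field_simp; ring
    rw [this]
    intro h
    have := (div_eq_zero_iff.mp h).resolve_right h6'
    nlinarith
  refine ⟨?_, ?_, ?_⟩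
  · rw [hy, hs1]
    rw [div_eq_div_iff hd1 (ne_of_gt h3)]
    field_simp
    ring
  · rw [hy, hs2, div_eq_one_iff_eq hd2]
    field_simp
    ring
  · have hyfun : y = fun t => (-6 + 2 * ρ₀ - 15 * t - ρ₀ * t -
        6 * Real.sqrt (6 - 2 * ρ₀ - (15 + ρ₀) * t * (1 - t))) /
        (-30 - 2 * ρ₀ + 15 * t + ρ₀ * t) := funext hy
    have ht2le : (3 + 2*ρ₀)/(6 + ρ₀) ≤ 1 := by
      rw [div_le_one h6]; linarith
    have ht1pos : 0 < (3 - ρ₀)/(6 + ρ₀) := by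
      apply div_pos <;> linarith
    have hden : ∀ t : ℝ, t ≤ 1 → -30 - 2 * ρ₀ + 15 * t + ρ₀ * t ≠ 0 := by
      intro t ht
      nlinarith
    apply strictMonoOn_of_deriv_pos (convex_Icc _ _)
    · rw [hyfun]
      apply ContinuousOn.div
      · fun_prop
      · fun_prop
      · intro t ht
        exact hden t (ht.2.trans ht2le)
    · intro x hx
      rw [interior_Icc] at hx
      have hx0 : 0 < x := lt_trans ht1pos hx.1
      have hx1 : x < 1 := lt_of_lt_of_le hx.2 ht2le
      have hupos : 0 < 6 - 2 * ρ₀ - (15 + ρ₀) * x * (1 - x) := by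
        nlinarith [sq_nonneg (x - 1/2), sq_nonneg x]
      set s := Real.sqrt (6 - 2 * ρ₀ - (15 + ρ₀) * x * (1 - x)) with hs
      have hspos : 0 < s := Real.sqrt_pos.mpr hupos
      have hssq : s ^ 2 = 6 - 2 * ρ₀ - (15 + ρ₀) * x * (1 - x) := Real.sq_sqrt hupos.le
      have hdx : -30 - 2 * ρ₀ + 15 * x + ρ₀ * x ≠ 0 := hden x hx1.le
      clear_value s
      have hN : HasDerivAt (fun t : ℝ => -6 + 2 * ρ₀ - 15 * t - ρ₀ * t -
          6 * Real.sqrt (6 - 2 * ρ₀ - (15 + ρ₀) * t * (1 - t)))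
          (-15 - ρ₀ - 6 * (-((15 + ρ₀) * (1 - 2*x)) / (2 * s))) x := by
        have hu : HasDerivAt (fun t : ℝ => 6 - 2 * ρ₀ - (15 + ρ₀) * t * (1 - t))
            (-((15 + ρ₀) * (1 - 2*x))) x := by
          have h := ((((hasDerivAt_id x).const_mul (15 + ρ₀)).mul
            ((hasDerivAt_const x (1:ℝ)).sub (hasDerivAt_id x))).const_sub (6 - 2 * ρ₀))
          refine h.congr_deriv ?_
          simp; ring
        have hsq := hu.sqrt (ne_of_gt hupos)
        rw [← hs] at hsq
        have h := ((((hasDerivAt_id x).const_mul (15:ℝ)).const_sub (-6 + 2 * ρ₀)).sub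
          ((hasDerivAt_id x).const_mul ρ₀)).sub (hsq.const_mul 6)
        refine h.congr_deriv ?_
        ring
      have hD : HasDerivAt (fun t : ℝ => -30 - 2 * ρ₀ + 15 * t + ρ₀ * t) (15 + ρ₀) x := by
        have h := (((hasDerivAt_id x).const_mul (15:ℝ)).const_add (-30 - 2 * ρ₀)).add
          ((hasDerivAt_id x).const_mul ρ₀)
        refine h.congr_deriv ?_
        simp
      have hder := hN.div hD hdx
      rw [hyfun, (show deriv (fun t : ℝ => (-6 + 2 * ρ₀ - 15 * t - ρ₀ * t -
          6 * Real.sqrt (6 - 2 * ρ₀ - (15 + ρ₀) * t * (1 - t))) /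
          (-30 - 2 * ρ₀ + 15 * t + ρ₀ * t)) x = _ from hder.deriv)]
      rw [← hs]
      apply div_pos
      · have hkey : (0:ℝ) < 12 * s + (3*(15+ρ₀)*x + 2*(6-2*ρ₀) - 2*(15+ρ₀)) := by
          have hid : 144 * s^2 - (2*(15+ρ₀) - 2*(6-2*ρ₀) - 3*(15+ρ₀)*x)^2
              = 9*(15+ρ₀)*(1-ρ₀)*(x-2)^2 := by rw [hssq]; ring
          nlinarith [hspos, sq_nonneg (x-2), mul_pos hspos hspos,
            mul_pos (mul_pos (by linarith : (0:ℝ) < 15 + ρ₀) (by linarith : (0:ℝ) < 1 - ρ₀))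
              (by nlinarith : (0:ℝ) < (x-2)^2)]
        have hprod : s * ((-15 - ρ₀ - 6 * (-((15 + ρ₀) * (1 - 2*x)) / (2 * s))) *
              (-30 - 2 * ρ₀ + 15 * x + ρ₀ * x) -
            (-6 + 2 * ρ₀ - 15 * x - ρ₀ * x - 6 * s) * (15 + ρ₀))
            = 3*(15+ρ₀) * (12 * s + (3*(15+ρ₀)*x + 2*(6-2*ρ₀) - 2*(15+ρ₀))) := by
          field_simp
          linear_combination (12*(15+ρ₀)) * hssq
        nlinarith [hprod, hspos, hkey, mul_pos (by linarith : (0:ℝ) < 3*(15+ρ₀)) hkey]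
      · exact pow_two_pos_of_ne_zero hdx
end

section
/- Fix ρ₀ ∈ (0,1). With S_{ρ₀}(t) = (9 - ρ₀ + 4√(6 - 2ρ₀ - (15+ρ₀)t(1-t)))/(15+ρ₀) and the linear function g(t) = (-3 + 3ρ₀ - 2ρ₀t)/(-3 + ρ₀), one has g(t) ≤ S_{ρ₀}(t) for all t ∈ [1/2, (3+2ρ₀)/(6+ρ₀)], with equality exactly at t = (3+2ρ₀)/(6+ρ₀). -/
set_option maxHeartbeats 1600000 in
theorem g_le_S (ρ₀ : ℝ) (hρ : ρ₀ ∈ Set.Ioo (0:ℝ) 1)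
    (S g : ℝ → ℝ)
    (hS : ∀ t, S t = (9 - ρ₀ + 4 * Real.sqrt (6 - 2 * ρ₀ - (15 + ρ₀) * t * (1 - t))) /
        (15 + ρ₀))
    (hg : ∀ t, g t = (-3 + 3 * ρ₀ - 2 * ρ₀ * t) / (-3 + ρ₀)) :
    ∀ t ∈ Set.Icc (1/2 : ℝ) ((3 + 2 * ρ₀)/(6 + ρ₀)),
      g t ≤ S t ∧ (g t = S t ↔ t = (3 + 2 * ρ₀)/(6 + ρ₀)) := by
  obtain ⟨hρ0, hρ1⟩ := hρ
  have h3 : (0:ℝ) < 3 - ρ₀ := by linarith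
  have h15 : (0:ℝ) < 15 + ρ₀ := by linarith
  have h6 : (0:ℝ) < 6 + ρ₀ := by linarith
  intro t ht
  obtain ⟨ht1, ht2⟩ := ht
  obtain ⟨D, hD⟩ : ∃ D : ℝ, D = 6 - 2 * ρ₀ - (15 + ρ₀) * t * (1 - t) := ⟨_, rfl⟩
  have hDpos : 0 < D := by rw [hD]; nlinarith [sq_nonneg (t - 1/2)]
  obtain ⟨s, hs⟩ : ∃ s : ℝ, s = Real.sqrt D := ⟨_, rfl⟩
  have hsnn : 0 ≤ s := hs ▸ Real.sqrt_nonneg D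
  have hs2 : s ^ 2 = D := by rw [hs]; exact Real.sq_sqrt hDpos.le
  obtain ⟨G, hG⟩ : ∃ G : ℝ, G = g t := ⟨_, rfl⟩
  have hGval : G = (-3 + 3 * ρ₀ - 2 * ρ₀ * t) / (-3 + ρ₀) := by rw [hG, hg]
  have hSval : S t = (9 - ρ₀ + 4 * s) / (15 + ρ₀) := by
    rw [hS, hs, hD]
  have hne : (-3 + ρ₀ : ℝ) ≠ 0 := by linarith
  -- A := (15+ρ₀) * G - (9 - ρ₀)
  have hA : ((15 + ρ₀) * G - (9 - ρ₀)) * (3 - ρ₀)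
      = 2 * (9 - 15 * ρ₀ - 2 * ρ₀ ^ 2 + ρ₀ * (15 + ρ₀) * t) := by
    rw [hGval]; field_simp; ring
  have hApos : 0 < (15 + ρ₀) * G - (9 - ρ₀) := by
    have h1 : 0 < 2 * (9 - 15 * ρ₀ - 2 * ρ₀ ^ 2 + ρ₀ * (15 + ρ₀) * t) := by nlinarith
    nlinarith
  -- key identity
  have hkey : (3 - ρ₀) ^ 2 * (16 * D - ((15 + ρ₀) * G - (9 - ρ₀)) ^ 2)
      = 4 * (1 - ρ₀) * (15 + ρ₀) * ((6 + ρ₀) * t - (3 + 2 * ρ₀)) ^ 2 := by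
    rw [hGval, hD]; field_simp; ring
  have hFnn : 0 ≤ 16 * D - ((15 + ρ₀) * G - (9 - ρ₀)) ^ 2 := by
    have h1 : 0 ≤ 4 * (1 - ρ₀) * (15 + ρ₀) * ((6 + ρ₀) * t - (3 + 2 * ρ₀)) ^ 2 := by
      have h2 : (0:ℝ) < 4 * (1 - ρ₀) * (15 + ρ₀) := by nlinarith
      positivity
    nlinarith [sq_nonneg (3 - ρ₀)]
  have hAle : (15 + ρ₀) * G - (9 - ρ₀) ≤ 4 * s := by
    have hsq' : ((15 + ρ₀) * G - (9 - ρ₀)) ^ 2 ≤ (4 * s) ^ 2 := by nlinarith [hs2]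
    exact (pow_le_pow_iff_left₀ hApos.le (by positivity) two_ne_zero).mp hsq' 
  have hgle : g t ≤ S t := by
    rw [← hG, hSval, le_div_iff₀ h15]
    linarith
  refine ⟨hgle, ?_, ?_⟩
  · intro heq
    rw [← hG, hSval] at heq
    have hA4s : (15 + ρ₀) * G - (9 - ρ₀) = 4 * s := by
      rw [heq]; field_simp; ring
    have hzero : 4 * (1 - ρ₀) * (15 + ρ₀) * ((6 + ρ₀) * t - (3 + 2 * ρ₀)) ^ 2 = 0 := by
      rw [← hkey, hA4s]; linear_combination (-16 * (3 - ρ₀) ^ 2) * hs2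
    have hc : (0:ℝ) < 4 * (1 - ρ₀) * (15 + ρ₀) := by nlinarith
    have hsq : ((6 + ρ₀) * t - (3 + 2 * ρ₀)) ^ 2 = 0 := by
      rcases mul_eq_zero.mp hzero with h | h
      · exact absurd h hc.ne'
      · exact h
    have hl : (6 + ρ₀) * t - (3 + 2 * ρ₀) = 0 :=
      pow_eq_zero_iff (n := 2) (by norm_num) |>.mp hsq
    rw [eq_div_iff h6.ne']
    linarith
  · intro heq
    have hl : (6 + ρ₀) * t - (3 + 2 * ρ₀) = 0 := by
      rw [heq]; field_simp; ring
    have hF0 : 16 * D - ((15 + ρ₀) * G - (9 - ρ₀)) ^ 2 = 0 := by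
      have hk : (3 - ρ₀) ^ 2 * (16 * D - ((15 + ρ₀) * G - (9 - ρ₀)) ^ 2) = 0 := by
        rw [hkey, hl]; ring
      rcases mul_eq_zero.mp hk with h | h
      · exact absurd h (by positivity)
      · exact h
    have hA4s : (15 + ρ₀) * G - (9 - ρ₀) = 4 * s := by
      have hmul : ((15 + ρ₀) * G - (9 - ρ₀) - 4 * s) * ((15 + ρ₀) * G - (9 - ρ₀) + 4 * s) = 0 := by
        linear_combination (-1) * hF0 + (-16) * hs2
      rcases mul_eq_zero.mp hmul with h | h
      · linarith
      · linarith
    rw [← hG, hSval, eq_div_iff h15.ne']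
    linarith
end

section
/- Fix τ₀ ∈ (0,1). For every y ∈ [1/(1+τ₀), 1], the function P_{h_{τ₀}(y), y} (where h_{τ₀}(y) = (-1+y+τ₀y)/(-3+τ₀+4y)) satisfies P_{h_{τ₀}(y), y}(1/2) = 1 - τ₀/2; i.e., the value at 1/2 is independent of y. Consequently the pointwise supremum over y ∈ [1/(1+τ₀), 1] of the family P_{h_{τ₀}(y),y} equals the tent function T_{1/2, 1-τ₀/2}. -/
theorem P_half_indep (τ₀ : ℝ) (hτ : τ₀ ∈ Set.Ioo (0:ℝ) 1)
    (P : ℝ → ℝ → ℝ → ℝ)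
    (hP : ∀ x y t, P x y t = if t ≤ x then 1 - t
      else if t ≤ y then ((1 - x - y)/(x - y)) * (t - y) + y else t)
    (h : ℝ → ℝ) (hh : ∀ y, h y = (-1 + y + τ₀ * y) / (-3 + τ₀ + 4 * y))
    (T : ℝ → ℝ)
    (hT : ∀ t, T t = if t ≤ 1/2 then 1 + ((1 - τ₀/2) - 1) / (1/2) * t
      else (1 - τ₀/2) + (1 - (1 - τ₀/2)) / (1/2) * (t - 1/2)) :
    (∀ y ∈ Set.Icc (1/(1 + τ₀)) 1, P (h y) y (1/2) = 1 - τ₀/2) ∧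
    (∀ t ∈ Set.Icc (0:ℝ) 1,
      sSup ((fun y => P (h y) y t) '' Set.Icc (1/(1 + τ₀)) 1) = T t) := by
  obtain ⟨hτ0, hτ1⟩ := hτ
  have h1τ : (0:ℝ) < 1 + τ₀ := by linarith
  have hfacts : ∀ y ∈ Set.Icc (1/(1 + τ₀)) 1,
      1/2 < y ∧ h y < 1/2 ∧ (1 - h y - y)/(h y - y) = (τ₀ + 2*y - 2)/(2*y - 1) := by
    intro y hy
    obtain ⟨hyl, hyu⟩ := hy
    have hy1 : 1 ≤ y * (1 + τ₀) := by
      rw [div_le_iff₀ h1τ] at hyl; linarith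
    have hy0 : 0 < y := by nlinarith
    have hyh : 1/2 < y := by nlinarith
    have hD : 0 < -3 + τ₀ + 4*y := by nlinarith [sq_nonneg (1 - τ₀)]
    have hx : h y < 1/2 := by
      rw [hh, div_lt_iff₀ hD]
      nlinarith [mul_pos (show (0:ℝ) < 1 - τ₀ by linarith) (show (0:ℝ) < 2*y - 1 by linarith)]
    refine ⟨hyh, hx, ?_⟩
    have hxy : h y - y ≠ 0 := by
      have : h y - y < 0 := by linarith
      exact this.ne
    have h2y : 2*y - 1 ≠ 0 := ne_of_gt (by linarith)
    rw [div_eq_div_iff hxy h2y, hh]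
    have e : (-1 + y + τ₀ * y) / (-3 + τ₀ + 4 * y) * (-3 + τ₀ + 4 * y) = -1 + y + τ₀ * y :=
      div_mul_cancel₀ _ hD.ne'
    linear_combination (-1 : ℝ) * e
  have part1 : ∀ y ∈ Set.Icc (1/(1 + τ₀)) 1, P (h y) y (1/2) = 1 - τ₀/2 := by
    intro y hy
    obtain ⟨hyh, hx, hslope⟩ := hfacts y hy
    have h2y : 2*y - 1 ≠ 0 := ne_of_gt (by linarith)
    rw [hP, if_neg (by linarith), if_pos hyh.le, hslope]
    field_simp
    ring
  refine ⟨part1, ?_⟩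
  intro t ht
  have hub : ∀ v ∈ (fun y => P (h y) y t) '' Set.Icc (1/(1 + τ₀)) 1, v ≤ T t := by
    rintro v ⟨y, hy, rfl⟩
    obtain ⟨hyh, hx, hslope⟩ := hfacts y hy
    obtain ⟨hyl, hyu⟩ := hy
    have hy1 : 1 ≤ y * (1 + τ₀) := by
      rw [div_le_iff₀ h1τ] at hyl; linarith
    have h2yp : (0:ℝ) < 2*y - 1 := by linarith
    simp only [hP, hT]
    split_ifs with h1 h2 h3 h4
    · nlinarith [mul_nonneg ht.1 (show (0:ℝ) ≤ 1 - τ₀ by linarith)]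
    · linarith
    · -- middle branch, t ≤ 1/2
      rw [hslope, div_mul_eq_mul_div, ← le_sub_iff_add_le, div_le_iff₀ h2yp]
      nlinarith [mul_nonneg (show (0:ℝ) ≤ 1/2 - t by linarith)
        (show (0:ℝ) ≤ y * (1 + τ₀) - 1 by linarith)]
    · -- middle branch, t > 1/2
      rw [hslope, div_mul_eq_mul_div, ← le_sub_iff_add_le, div_le_iff₀ h2yp]
      nlinarith [mul_nonneg (mul_nonneg (show (0:ℝ) ≤ t - 1/2 by linarith)
        (show (0:ℝ) ≤ 1 - y by linarith)) (show (0:ℝ) ≤ 1 - τ₀ by linarith)]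
    · linarith
    · nlinarith [mul_nonneg (show (0:ℝ) ≤ 1 - τ₀ by linarith)
        (show (0:ℝ) ≤ 1 - t by linarith [ht.2])]
  have hmem1 : (1:ℝ) ∈ Set.Icc (1/(1 + τ₀)) 1 := by
    constructor
    · rw [div_le_one h1τ]; linarith
    · exact le_refl 1
  have hTmem : T t ∈ (fun y => P (h y) y t) '' Set.Icc (1/(1 + τ₀)) 1 := by
    rcases le_or_gt t (1/2) with hth | hth
    · -- witness y₀ = 1/(1+τ₀)
      have hmem0 : (1/(1 + τ₀) : ℝ) ∈ Set.Icc (1/(1 + τ₀)) 1 := by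
        constructor
        · exact le_refl _
        · rw [div_le_one h1τ]; linarith
      refine ⟨1/(1 + τ₀), hmem0, ?_⟩
      have hx0 : h (1/(1 + τ₀)) = 0 := by
        rw [hh, div_eq_zero_iff]
        left
        field_simp
        ring
      have hy0h : (1/2 : ℝ) < 1/(1 + τ₀) := by
        rw [div_lt_div_iff₀ (by norm_num) h1τ]; linarith
      simp only [hx0, hP, hT, if_pos hth]
      rcases eq_or_lt_of_le ht.1 with h0 | h0
      · rw [if_pos (le_of_eq h0.symm)]
        rw [← h0]; ring
      · rw [if_neg (not_le.mpr h0), if_pos (by linarith : t ≤ 1/(1 + τ₀))]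
        have hne : (0:ℝ) - 1/(1 + τ₀) ≠ 0 := by
          have h2 : (0:ℝ) < 1/(1 + τ₀) := by positivity
          intro hc; rw [zero_sub, neg_eq_zero] at hc; rw [hc] at h2; exact lt_irrefl 0 h2
        have hr : (1 - 0 - 1/(1 + τ₀))/(0 - 1/(1 + τ₀)) = -τ₀ := by
          rw [div_eq_iff hne]; field_simp; ring
        rw [hr]; field_simp; ring
    · -- witness y = 1
      refine ⟨1, hmem1, ?_⟩
      have hx1 : h 1 = τ₀/(1 + τ₀) := by
        rw [hh]
        congr 1 <;> ring
      have hxlt : τ₀/(1 + τ₀) < 1/2 := by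
        rw [div_lt_div_iff₀ h1τ (by norm_num)]; linarith
      have hd : τ₀/(1 + τ₀) - 1 ≠ 0 := by
        have : τ₀/(1 + τ₀) - 1 < 0 := by linarith
        exact this.ne
      simp only [hx1, hP, hT, if_neg (not_le.mpr hth),
        if_neg (not_le.mpr (lt_of_lt_of_le hxlt hth.le)), if_pos ht.2]
      have hr : (1 - τ₀/(1 + τ₀) - 1)/(τ₀/(1 + τ₀) - 1) = τ₀ := by
        rw [div_eq_iff hd]; field_simp; ring
      rw [hr]; ring
  have hne : ((fun y => P (h y) y t) '' Set.Icc (1/(1 + τ₀)) 1).Nonempty :=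
    ⟨T t, hTmem⟩
  exact le_antisymm (csSup_le hne hub) (le_csSup ⟨T t, hub⟩ hTmem)
end
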